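/- Let P be a ground normal logic program. If P has two distinct stable models A_1 and A_2, then the dependence graph of P has a positive cycle C such that for every vertex v on C, the truth values of v in A_1 and A_2 differ (i.e., exactly one of A_1, A_2 contains v). -/
import Mathlib


/-- A rule of a ground normal logic program. -/
structure Rule (V : Type*) where
  head : V
  pbody : Finset V
  nbody : Finset V
deriving DecidableEq

variable {V : Type*} [DecidableEq V] [Fintype V]

/-- The body formula of a rule holds in state `x`. -/
def bodySat (r : Rule V) (x : V → Bool) : Prop :=
  (∀ p ∈ r.pbody, x p = true) ∧ (∀ p ∈ r.nbody, x p = false)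

instance (r : Rule V) (x : V → Bool) : Decidable (bodySat r x) := by
  unfold bodySat; infer_instance

/-- The Boolean network encoding of a logic program. -/
def enc (P : Finset (Rule V)) (v : V) (x : V → Bool) : Bool :=
  decide (∃ r ∈ P, r.head = v ∧ bodySat r x)

/-- Positive arc of the dependence graph. -/
def posDG (P : Finset (Rule V)) (u v : V) : Prop :=
  ∃ r ∈ P, r.head = v ∧ u ∈ r.pbody

/-- Negative arc of the dependence graph. -/
def negDG (P : Finset (Rule V)) (u v : V) : Prop :=
  ∃ r ∈ P, r.head = v ∧ u ∈ r.nbody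

/-- Positive arc of the influence graph of a Boolean network. -/
def posIG (f : V → (V → Bool) → Bool) (u v : V) : Prop :=
  ∃ x : V → Bool, f v (Function.update x u false) = false ∧ f v (Function.update x u true) = true

/-- Negative arc of the influence graph of a Boolean network. -/
def negIG (f : V → (V → Bool) → Bool) (u v : V) : Prop :=
  ∃ x : V → Bool, f v (Function.update x u false) = true ∧ f v (Function.update x u true) = false

/-- `y` is a Herbrand model of the reduct of `P` with respect to `x`. -/
def modelsReduct (P : Finset (Rule V)) (x y : V → Bool) : Prop :=
  ∀ r ∈ P, (∀ p ∈ r.nbody, x p = false) → (∀ p ∈ r.pbody, y p = true) → y r.head = true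

/-- `x` is a stable model of `P`: it is the least Herbrand model of the reduct `P^x`. -/
def isStable (P : Finset (Rule V)) (x : V → Bool) : Prop :=
  modelsReduct P x x ∧ ∀ y : V → Bool, modelsReduct P x y → ∀ v, x v = true → y v = true

/-- Signed directed walks: `SWalk pos neg u v s n` means there is a directed walk of
length `n` from `u` to `v` whose parity of negative arcs is `s` (`true` = odd). -/
inductive SWalk {V : Type*} (pos neg : V → V → Prop) : V → V → Bool → ℕ → Prop where
  | nil (u : V) : SWalk pos neg u u false 0
  | consPos {u v w : V} {s : Bool} {n : ℕ} :
      pos u v → SWalk pos neg v w s n → SWalk pos neg u w s (n + 1)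
  | consNeg {u v w : V} {s : Bool} {n : ℕ} :
      neg u v → SWalk pos neg v w s n → SWalk pos neg u w (!s) (n + 1)

lemma supported_aux {V : Type*} [DecidableEq V] [Fintype V] (P : Finset (Rule V))
    (x : V → Bool) (hx : isStable P x) (v : V) (hv : x v = true) :
    ∃ r ∈ P, r.head = v ∧ (∀ p ∈ r.pbody, x p = true) ∧ (∀ p ∈ r.nbody, x p = false) := by
  by_contra hno
  push_neg at hno
  set y : V → Bool := Function.update x v false with hy
  have hmod : modelsReduct P x y := by
    intro r hr hn hp
    have hps : ∀ p ∈ r.pbody, x p = true := by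
      intro p hpmem
      have := hp p hpmem
      by_cases hpv : p = v
      · simp [hy, Function.update, hpv] at this
      · simpa [hy, Function.update, hpv] using this
    by_cases hh : r.head = v
    · obtain ⟨q, hq, hqne⟩ := hno r hr hh hps
      exact absurd (hn q hq) hqne
    · have := hx.1 r hr hn hps
      simpa [hy, Function.update, hh] using this
  have := hx.2 y hmod v hv
  simp [hy, Function.update] at this

lemma step_aux {V : Type*} [DecidableEq V] [Fintype V] (P : Finset (Rule V))
    (A B : V → Bool) (hA : isStable P A) (hB : isStable P B) (v : V) (hv : A v ≠ B v) :
    ∃ u, A u ≠ B u ∧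
      ((posDG P u v ∧ A u = A v) ∨ (negDG P u v ∧ A u ≠ A v)) := by
  cases hAv : A v with
  | true =>
    have hBv : B v = false := by
      cases hBv : B v
      · rfl
      · rw [hAv, hBv] at hv; exact absurd rfl hv
    obtain ⟨r, hr, hh, hpb, hnb⟩ := supported_aux P A hA v hAv
    have key : (∃ p ∈ r.pbody, B p = false) ∨ (∃ p ∈ r.nbody, B p = true) := by
      by_contra hk
      push_neg at hk
      have h1 : ∀ p ∈ r.pbody, B p = true := by
        intro p hp
        cases hBp : B p
        · exact absurd hBp (hk.1 p hp)
        · rfl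
      have h2 : ∀ p ∈ r.nbody, B p = false := by
        intro p hp
        cases hBp : B p
        · rfl
        · exact absurd hBp (hk.2 p hp)
      have := hB.1 r hr h2 h1
      rw [hh] at this
      rw [this] at hBv
      exact Bool.noConfusion hBv
    rcases key with ⟨p, hp, hBp⟩ | ⟨p, hp, hBp⟩
    · have hAp := hpb p hp
      refine ⟨p, by rw [hAp, hBp]; simp, Or.inl ⟨⟨r, hr, hh, hp⟩, by simp [hAp]⟩⟩
    · have hAp := hnb p hp
      refine ⟨p, by rw [hAp, hBp]; simp, Or.inr ⟨⟨r, hr, hh, hp⟩, by simp [hAp]⟩⟩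
  | false =>
    have hBv : B v = true := by
      cases hBv : B v
      · rw [hAv, hBv] at hv; exact absurd rfl hv
      · rfl
    obtain ⟨r, hr, hh, hpb, hnb⟩ := supported_aux P B hB v hBv
    have key : (∃ p ∈ r.pbody, A p = false) ∨ (∃ p ∈ r.nbody, A p = true) := by
      by_contra hk
      push_neg at hk
      have h1 : ∀ p ∈ r.pbody, A p = true := by
        intro p hp
        cases hAp : A p
        · exact absurd hAp (hk.1 p hp)
        · rfl
      have h2 : ∀ p ∈ r.nbody, A p = false := by
        intro p hp
        cases hAp : A p
        · rfl
        · exact absurd hAp (hk.2 p hp)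
      have := hA.1 r hr h2 h1
      rw [hh] at this
      rw [this] at hAv
      exact Bool.noConfusion hAv
    rcases key with ⟨p, hp, hApf⟩ | ⟨p, hp, hApt⟩
    · have hBp := hpb p hp
      refine ⟨p, by rw [hApf, hBp]; simp, Or.inl ⟨⟨r, hr, hh, hp⟩, by simp [hApf]⟩⟩
    · have hBp := hnb p hp
      refine ⟨p, by rw [hApt, hBp]; simp, Or.inr ⟨⟨r, hr, hh, hp⟩, by simp [hApt]⟩⟩

/-- if `P` has two distinct stable models `A` and `B`, then the dependence
graph of `P` has a positive cycle all of whose vertices get different truth values in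
`A` and `B`. -/
theorem stmt6 {V : Type*} [DecidableEq V] [Fintype V] (P : Finset (Rule V))
    (A B : V → Bool) (hA : isStable P A) (hB : isStable P B) (hAB : A ≠ B) :
    ∃ (u : V) (n : ℕ), n ≠ 0 ∧
      SWalk (fun a b => posDG P a b ∧ A a ≠ B a ∧ A b ≠ B b)
            (fun a b => negDG P a b ∧ A a ≠ B a ∧ A b ≠ B b) u u false n := by
  classical
  obtain ⟨v0, hv0⟩ : ∃ v, A v ≠ B v := Function.ne_iff.mp hAB
  have hstep := step_aux P A B hA hB
  let g : ℕ → {v : V // A v ≠ B v} := fun n =>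
    Nat.rec ⟨v0, hv0⟩
      (fun _ p => ⟨(hstep p.1 p.2).choose, (hstep p.1 p.2).choose_spec.1⟩) n
  have hg : ∀ n, (posDG P (g (n+1)).1 (g n).1 ∧ A (g (n+1)).1 = A (g n).1) ∨
      (negDG P (g (n+1)).1 (g n).1 ∧ A (g (n+1)).1 ≠ A (g n).1) :=
    fun n => (hstep (g n).1 (g n).2).choose_spec.2
  set pos : V → V → Prop := fun a b => posDG P a b ∧ A a ≠ B a ∧ A b ≠ B b with hpos
  set neg : V → V → Prop := fun a b => negDG P a b ∧ A a ≠ B a ∧ A b ≠ B b with hneg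
  have walk : ∀ m i, SWalk pos neg (g (i+m)).1 (g i).1 (A (g (i+m)).1 != A (g i).1) m := by
    intro m
    induction m with
    | zero => intro i; simpa using SWalk.nil (pos := pos) (neg := neg) (g i).1
    | succ m ih =>
      intro i
      have hmi : i + (m + 1) = (i + m) + 1 := by omega
      rw [hmi]
      rcases hg (i + m) with ⟨harc, heq⟩ | ⟨harc, hne⟩
      · have hw := ih i
        rw [← heq] at hw
        exact SWalk.consPos ⟨harc, (g (i+m+1)).2, (g (i+m)).2⟩ hw
      · have hw := ih i
        have hsg : (A (g (i+m+1)).1 != A (g i).1) = !(A (g (i+m)).1 != A (g i).1) := by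
          cases hx : A (g (i+m+1)).1 <;> cases hy : A (g (i+m)).1 <;>
            simp_all
        rw [hsg]
        exact SWalk.consNeg ⟨harc, (g (i+m+1)).2, (g (i+m)).2⟩ hw
  obtain ⟨i, j, hij, hgij⟩ := Finite.exists_ne_map_eq_of_infinite g
  rcases Nat.lt_or_ge i j with hlt | hge
  · refine ⟨(g j).1, j - i, by omega, ?_⟩
    have hw := walk (j - i) i
    have hji : i + (j - i) = j := by omega
    rw [hji, hgij] at hw
    simpa using hw
  · have hlt : j < i := lt_of_le_of_ne hge (Ne.symm hij)
    refine ⟨(g i).1, i - j, by omega, ?_⟩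
    have hw := walk (i - j) j
    have hji : j + (i - j) = i := by omega
    rw [hji, ← hgij] at hw
    simpa using hw
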